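/- Let A be an n × n real symmetric matrix (n ≥ 1) whose off-diagonal entries are all nonnegative (A_{ij} ≥ 0 for all i ≠ j). Then there exists a nonzero eigenvector v of A associated to the largest eigenvalue of A all of whose coordinates are nonnegative (v_i ≥ 0 for all i). -/

import Mathlib

open scoped Matrix

/-- A real symmetric matrix with nonnegative off-diagonal entries has a nonzero
entrywise-nonnegative eigenvector associated to its largest eigenvalue. -/
theorem largest_eigenvalue_nonneg_eigenvector (n : ℕ) (hn : 1 ≤ n)
    (A : Matrix (Fin n) (Fin n) ℝ) (hsymm : A.IsSymm)
    (hoff : ∀ i j : Fin n, i ≠ j → 0 ≤ A i j) :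
    ∃ (lam : ℝ) (v : Fin n → ℝ), v ≠ 0 ∧ (∀ i, 0 ≤ v i) ∧ A.mulVec v = lam • v ∧
      ∀ (μ : ℝ) (w : Fin n → ℝ), w ≠ 0 → A.mulVec w = μ • w → μ ≤ lam := by
  have hA : A.IsHermitian := by
    rwa [Matrix.IsHermitian, Matrix.conjTranspose_eq_transpose_of_trivial]
  haveI : Nonempty (Fin n) := ⟨⟨0, hn⟩⟩
  -- largest eigenvalue
  obtain ⟨i₀, -, hmax⟩ := Finset.exists_max_image Finset.univ hA.eigenvalues ⟨Classical.arbitrary _, Finset.mem_univ _⟩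
  set lam := hA.eigenvalues i₀ with hlam
  -- M := lam • 1 - A is PSD
  have hspec := hA.spectral_theorem
  set U : Matrix (Fin n) (Fin n) ℝ := (hA.eigenvectorUnitary : Matrix (Fin n) (Fin n) ℝ) with hUdef
  have hU : U * star U = 1 := (Matrix.mem_unitaryGroup_iff).mp hA.eigenvectorUnitary.2
  set M : Matrix (Fin n) (Fin n) ℝ := lam • 1 - A with hM
  have hMdecomp : M = U * Matrix.diagonal (fun i => lam - hA.eigenvalues i) * star U := by
    have h1 : lam • (1 : Matrix (Fin n) (Fin n) ℝ)
        = U * Matrix.diagonal (fun _ : Fin n => lam) * star U := by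
      have hd : Matrix.diagonal (fun _ : Fin n => lam) = lam • (1 : Matrix (Fin n) (Fin n) ℝ) := by
        ext i j
        by_cases h : i = j <;> simp [Matrix.diagonal, Matrix.one_apply, h]
      rw [hd, Matrix.mul_smul, Matrix.smul_mul, Matrix.mul_one, hU]
    have h2 : Matrix.diagonal (fun i => lam - hA.eigenvalues i)
        = Matrix.diagonal (fun _ : Fin n => lam) - Matrix.diagonal (RCLike.ofReal ∘ hA.eigenvalues) := by
      rw [Matrix.diagonal_sub]; rfl
    rw [hM, h2, Matrix.mul_sub, Matrix.sub_mul, ← h1]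
    exact congrArg (lam • 1 - ·) hspec
  have hMpsd : M.PosSemidef := by
    rw [hMdecomp]
    refine (Matrix.posSemidef_diagonal_iff.mpr fun i => sub_nonneg.mpr (hmax i (Finset.mem_univ i))).mul_mul_conjTranspose_same U
  -- quadratic form of M on eigenpairs
  have hquad : ∀ (x : Fin n → ℝ), x ⬝ᵥ M *ᵥ x = lam * (x ⬝ᵥ x) - x ⬝ᵥ A *ᵥ x := by
    intro x
    rw [hM, Matrix.sub_mulVec, dotProduct_sub, Matrix.smul_mulVec,
      Matrix.one_mulVec, dotProduct_smul, smul_eq_mul]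
  -- the eigenvector for lam
  set w : Fin n → ℝ := ⇑(hA.eigenvectorBasis i₀) with hw
  have hwne : w ≠ 0 := by
    have := hA.eigenvectorBasis.orthonormal.ne_zero i₀
    intro h
    apply this
    ext j
    exact congrFun h j
  have hweig : A.mulVec w = lam • w := hA.mulVec_eigenvectorBasis i₀
  set v : Fin n → ℝ := fun i => |w i| with hv
  have hvw : v ⬝ᵥ v = w ⬝ᵥ w := by
    simp only [dotProduct, hv, abs_mul_abs_self]
  have hvne : v ≠ 0 := by
    intro h
    apply hwne
    ext i
    have := congrFun h i
    simpa [hv, abs_eq_zero] using this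
  -- quadratic form comparison
  have hAle : w ⬝ᵥ A *ᵥ w ≤ v ⬝ᵥ A *ᵥ v := by
    simp only [dotProduct, Matrix.mulVec, dotProduct, Finset.mul_sum]
    refine Finset.sum_le_sum fun i _ => Finset.sum_le_sum fun j _ => ?_
    rcases eq_or_ne i j with rfl | hij
    · simp only [hv]
      rw [mul_left_comm (|w i|) (A i i) (|w i|), abs_mul_abs_self, mul_left_comm]
    · have h1 : w i * (A i j * w j) ≤ |w i| * (A i j * |w j|) := by
        rw [mul_left_comm, mul_left_comm (|w i|)]
        refine mul_le_mul_of_nonneg_left ?_ (hoff i j hij)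
        calc w i * w j ≤ |w i * w j| := le_abs_self _
          _ = |w i| * |w j| := abs_mul _ _
      exact h1
  have hAw : w ⬝ᵥ A *ᵥ w = lam * (w ⬝ᵥ w) := by
    rw [hweig, dotProduct_smul, smul_eq_mul]
  have hMv : M *ᵥ v = 0 := by
    have h1 : v ⬝ᵥ M *ᵥ v ≤ 0 := by
      rw [hquad, hvw]
      linarith
    have h2 : 0 ≤ v ⬝ᵥ M *ᵥ v := by
      have := hMpsd.dotProduct_mulVec_nonneg v
      simpa using this
    have h3 : v ⬝ᵥ M *ᵥ v = 0 := le_antisymm h1 h2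
    have := (hMpsd.dotProduct_mulVec_zero_iff v).mp (by simpa using h3)
    exact this
  have hveig : A.mulVec v = lam • v := by
    have h0 : lam • v - A *ᵥ v = 0 := by
      rw [show lam • v - A *ᵥ v = M *ᵥ v by
        rw [hM, Matrix.sub_mulVec, Matrix.smul_mulVec, Matrix.one_mulVec]]
      exact hMv
    exact (sub_eq_zero.mp h0).symm
  refine ⟨lam, v, hvne, fun i => abs_nonneg _, hveig, ?_⟩
  intro μ x hxne hxeig
  have hx : 0 < x ⬝ᵥ x := by
    rcases (Finset.sum_nonneg fun i _ => mul_self_nonneg (x i)).lt_or_eq with h | h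
    · exact h
    · exact absurd ((dotProduct_self_eq_zero).mp h.symm) hxne
  have hq : 0 ≤ (lam - μ) * (x ⬝ᵥ x) := by
    have := hMpsd.dotProduct_mulVec_nonneg x
    rw [show star x = x from rfl, hquad, hxeig, dotProduct_smul, smul_eq_mul] at this
    nlinarith [this]
  nlinarith [hq, hx]
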